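/- Let x₀ ∈ ℝ and let y₀, y₁ ≥ 0 be not both zero. Then the Legendre–Fenchel transform satisfies Λ*(x₀, y₀, x₀, y₁) = 2·(y₁ − y₀)². -/
import Mathlib

open Real in
lemma key_ineq (x0 y0 y1 δ γ : ℝ) (hy0 : 0 ≤ y0) (hy1 : 0 ≤ y1)
    (h0 : δ ≠ 0) (hδ : |δ| < π) :
    x0 * δ + y1 * γ -
      ((4 * δ ^ 2 * y0 ^ 2 + γ ^ 2) * Real.sin (δ / 2) + 4 * x0 * δ ^ 2 * Real.cos (δ / 2) +
        4 * y0 * γ * δ) / (4 * δ * Real.cos (δ / 2)) ≤ 2 * (y1 - y0) ^ 2 := by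
  have habs := abs_lt.mp hδ
  have hc : 0 < Real.cos (δ / 2) :=
    Real.cos_pos_of_mem_Ioo ⟨by linarith, by linarith⟩
  set s := Real.sin (δ / 2) with hs_def
  set c := Real.cos (δ / 2) with hc_def
  have hP : s ^ 2 + c ^ 2 = 1 := Real.sin_sq_add_cos_sq _
  have hP2 : 4*δ^2*y0^2*(s^2+c^2) = 4*δ^2*y0^2 := by rw [hP]; ring
  have h1 := sq_nonneg (s*γ - 2*δ*(c*y1 - y0))
  rw [sub_le_comm]
  rcases lt_or_gt_of_ne h0 with hneg | hpos
  · -- δ < 0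
    have hs : s < 0 := by
      have : Real.sin (-(δ/2)) > 0 := Real.sin_pos_of_pos_of_lt_pi (by linarith) (by linarith)
      rw [Real.sin_neg] at this; linarith
    have hus : δ / 2 ≤ s := by
      have := Real.sin_lt (x := -(δ/2)) (by linarith)
      rw [Real.sin_neg] at this; linarith
    have huc : s ≤ (δ/2) * c := by
      have h1 := Real.lt_tan (x := -(δ/2)) (by linarith) (by linarith)
      rw [Real.tan_neg] at h1
      have h2 : Real.tan (δ/2) < δ/2 := by linarith
      rw [Real.tan_eq_sin_div_cos] at h2
      have := (div_lt_iff₀ hc).mp h2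
      linarith
    have hδc : δ * c ≤ 0 := by nlinarith
    have hA : 0 ≤ δ*c*(2*s - δ*c)*(y0^2+y1^2) :=
      mul_nonneg (by nlinarith) (by positivity)
    have hB : 0 ≤ δ*c*(δ - 2*s)*(y0*y1) :=
      mul_nonneg (by nlinarith) (mul_nonneg hy0 hy1)
    have hD : 4 * δ * c < 0 := by nlinarith
    rw [le_div_iff_of_neg hD]
    have hkey : 0 ≤ s * (((4 * δ ^ 2 * y0 ^ 2 + γ ^ 2) * s + 4 * x0 * δ ^ 2 * c + 4 * y0 * γ * δ)
        - (x0 * δ + y1 * γ - 2 * (y1 - y0) ^ 2) * (4 * δ * c)) := by linarith [h1, hA, hB, hP2]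
    have hs' : 0 < -s := by linarith
    have h3 : (-s) * ((4 * δ ^ 2 * y0 ^ 2 + γ ^ 2) * s + 4 * x0 * δ ^ 2 * c + 4 * y0 * γ * δ)
        ≤ (-s) * ((x0 * δ + y1 * γ - 2 * (y1 - y0) ^ 2) * (4 * δ * c)) := by linarith [hkey]
    exact le_of_mul_le_mul_left h3 hs'
  · -- δ > 0
    have hs : 0 < s := Real.sin_pos_of_pos_of_lt_pi (by linarith) (by linarith)
    have hus : s ≤ δ / 2 := le_of_lt (Real.sin_lt (by linarith))
    have huc : (δ/2) * c ≤ s := by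
      have h1 := Real.lt_tan (x := δ/2) (by linarith) (by linarith)
      rw [Real.tan_eq_sin_div_cos] at h1
      have := (lt_div_iff₀ hc).mp h1
      linarith
    have hA : 0 ≤ δ*c*(2*s - δ*c)*(y0^2+y1^2) :=
      mul_nonneg (mul_nonneg (by positivity) (by linarith)) (by positivity)
    have hB : 0 ≤ δ*c*(δ - 2*s)*(y0*y1) :=
      mul_nonneg (mul_nonneg (by positivity) (by linarith)) (mul_nonneg hy0 hy1)
    have hD : 0 < 4 * δ * c := by positivity
    rw [le_div_iff₀ hD]
    have hkey : 0 ≤ s * (((4 * δ ^ 2 * y0 ^ 2 + γ ^ 2) * s + 4 * x0 * δ ^ 2 * c + 4 * y0 * γ * δ)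
        - (x0 * δ + y1 * γ - 2 * (y1 - y0) ^ 2) * (4 * δ * c)) := by linarith [h1, hA, hB, hP2]
    have h3 : s * ((x0 * δ + y1 * γ - 2 * (y1 - y0) ^ 2) * (4 * δ * c))
        ≤ s * ((4 * δ ^ 2 * y0 ^ 2 + γ ^ 2) * s + 4 * x0 * δ ^ 2 * c + 4 * y0 * γ * δ) := by
      linarith [hkey]
    exact le_of_mul_le_mul_left h3 hs

/-- The limiting cumulant generating function `Λ` for the Grushin model with
initial point `(x₀, y₀)`: for `0 < |δ| < π`,
`Λ(δ,γ) = [(4δ²y₀² + γ²)·sin(δ/2) + 4x₀δ²·cos(δ/2) + 4y₀γδ] / (4δ·cos(δ/2))`;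
`Λ(0,γ) = γ²/8 + y₀γ`; and `Λ(δ,γ) = +∞` for `|δ| ≥ π`. -/
noncomputable def Lam (x0 y0 : ℝ) (δ γ : ℝ) : EReal :=
  if |δ| < Real.pi then
    if δ = 0 then ((γ ^ 2 / 8 + y0 * γ : ℝ) : EReal)
    else ((((4 * δ ^ 2 * y0 ^ 2 + γ ^ 2) * Real.sin (δ / 2) + 4 * x0 * δ ^ 2 * Real.cos (δ / 2) +
        4 * y0 * γ * δ) / (4 * δ * Real.cos (δ / 2)) : ℝ) : EReal)
  else ⊤

/-- The Legendre–Fenchel transform `Λ*(x₀,y₀,x₁,y₁) = sup_{(δ,γ)} [x₁δ + y₁γ − Λ(δ,γ)]`. -/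
noncomputable def LamStar (x0 y0 x1 y1 : ℝ) : EReal :=
  ⨆ p : ℝ × ℝ, (((x1 * p.1 + y1 * p.2 : ℝ) : EReal) - Lam x0 y0 p.1 p.2)

/-- Theorem: for a vertical displacement, `Λ*(x₀, y₀, x₀, y₁) = 2(y₁ − y₀)²`. -/
theorem legendre_transform_vertical (x0 y0 y1 : ℝ)
    (hy0 : 0 ≤ y0) (hy1 : 0 ≤ y1) (hy : ¬(y0 = 0 ∧ y1 = 0)) :
    LamStar x0 y0 x0 y1 = ((2 * (y1 - y0) ^ 2 : ℝ) : EReal) := by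
  apply le_antisymm
  · apply iSup_le
    rintro ⟨δ, γ⟩
    unfold Lam
    by_cases hδ : |δ| < Real.pi
    · rw [if_pos hδ]
      by_cases h0 : δ = 0
      · subst h0
        rw [if_pos rfl, ← EReal.coe_sub, EReal.coe_le_coe_iff]
        nlinarith [sq_nonneg (γ - 4*(y1 - y0))]
      · rw [if_neg h0, ← EReal.coe_sub, EReal.coe_le_coe_iff]
        exact key_ineq x0 y0 y1 δ γ hy0 hy1 h0 hδ
    · rw [if_neg hδ]
      simp
  · refine le_iSup_of_le ⟨0, 4*(y1 - y0)⟩ ?_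
    unfold Lam
    rw [if_pos (by simpa using Real.pi_pos), if_pos rfl, ← EReal.coe_sub,
      EReal.coe_le_coe_iff]
    ring_nf
    nlinarith [sq_nonneg (y1 - y0)]
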